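/- Let ε, U be powers of 2 with εU sufficiently large, k = log*(εU), ε_0 = ε/8, ε_i = ε/2^{k−i+4}, U_0 = U, and U_{i+1} = 2⌈⌈log₂(ε_i U_i)+1⌉⌉/ε_i. Define Q_i = ε_i U_i / 16. Then for all i < k: Q_{i+1} ≤ max{log₂ Q_i, 8}. -/
import Mathlib


/-- `⌈⌈x⌉⌉`: the smallest (integer) power of 2 that is at least `x`. -/
noncomputable def cceil (x : ℝ) : ℝ := (2 : ℝ) ^ (⌈Real.logb 2 x⌉ : ℤ)

lemma cceil_pos (x : ℝ) : 0 < cceil x := by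
  unfold cceil; positivity

lemma cceil_le_two_mul (x : ℝ) (hx : 0 < x) : cceil x ≤ 2 * x := by
  unfold cceil
  have h1 : ((⌈Real.logb 2 x⌉ : ℤ) : ℝ) ≤ Real.logb 2 x + 1 :=
    le_of_lt (Int.ceil_lt_add_one _)
  have h2 : (2 : ℝ) ^ ((⌈Real.logb 2 x⌉ : ℤ) : ℝ) ≤ (2 : ℝ) ^ (Real.logb 2 x + 1) :=
    Real.rpow_le_rpow_of_exponent_le (by norm_num) h1
  rw [Real.rpow_intCast] at h2
  calc (2 : ℝ) ^ (⌈Real.logb 2 x⌉ : ℤ) ≤ (2 : ℝ) ^ (Real.logb 2 x + 1) := h2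
    _ = 2 * x := by
        rw [Real.rpow_add (by norm_num), Real.rpow_logb (by norm_num) (by norm_num) hx,
          Real.rpow_one]; ring

theorem Q_recursion (k : ℕ) (ε U Q : ℕ → ℝ)
    (hε : ∀ i, i ≤ k → 0 < ε i)
    (hεU : ∀ i, i ≤ k → 2 ≤ ε i * U i)
    (hεrec : ∀ i, i < k → ε (i + 1) ≤ 2 * ε i)
    (hUrec : ∀ i, i < k → U (i + 1) = 2 * cceil (Real.logb 2 (ε i * U i) + 1) / ε i)
    (hQ : ∀ i, i ≤ k → Q i = ε i * U i / 16) :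
    ∀ i, i < k → Q (i + 1) ≤ max (Real.logb 2 (Q i)) 8 := by
  intro i hi
  have hik : i ≤ k := le_of_lt hi
  have hik1 : i + 1 ≤ k := hi
  have hεi := hε i hik
  have hεi1 := hε (i + 1) hik1
  have hx := hεU i hik
  have hxpos : (0 : ℝ) < ε i * U i := lt_of_lt_of_le (by norm_num) hx
  set t := Real.logb 2 (ε i * U i) with ht
  have ht1 : (1 : ℝ) ≤ t := by
    have := Real.logb_le_logb_of_le (b := 2) (by norm_num) (by norm_num) hx
    simpa [Real.logb_self_eq_one (by norm_num : (1:ℝ) < 2)] using this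
  have hC : cceil (t + 1) ≤ 2 * (t + 1) := cceil_le_two_mul _ (by linarith)
  have hCpos : 0 < cceil (t + 1) := cceil_pos _
  have hU1pos : 0 < U (i + 1) := by
    rw [hUrec i hi]; positivity
  -- ε(i+1) * U(i+1) ≤ 2 ε_i * U(i+1) = 4 * cceil(t+1)
  have h1 : ε (i + 1) * U (i + 1) ≤ 4 * cceil (t + 1) := by
    have := mul_le_mul_of_nonneg_right (hεrec i hi) (le_of_lt hU1pos)
    calc ε (i + 1) * U (i + 1) ≤ 2 * ε i * U (i + 1) := this
      _ = 4 * cceil (t + 1) := by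
          rw [hUrec i hi]; field_simp; ring
  have h2 : Q (i + 1) ≤ (t + 1) / 2 := by
    rw [hQ (i + 1) hik1]; nlinarith
  have hQi : Real.logb 2 (Q i) = t - 4 := by
    rw [hQ i hik, Real.logb_div (ne_of_gt hxpos) (by norm_num)]
    have h16 : Real.logb 2 16 = 4 := by
      rw [show (16 : ℝ) = 2 ^ (4 : ℕ) by norm_num, Real.logb_pow,
        Real.logb_self_eq_one (by norm_num : (1:ℝ) < 2)]
      norm_num
    rw [h16]
  rw [hQi]
  rcases le_or_gt t 15 with h | h
  · exact le_trans h2 (le_max_of_le_right (by linarith))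
  · exact le_trans h2 (le_max_of_le_left (by linarith))
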